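/- arXiv:1908.01228 — 2 statements merged into one kernel-verified Lean document; each statement's English description precedes it below -/
import Mathlib

section
/- Let L > 0, let u < v be real numbers, and let f, g : [u,v] → ℝ be L-Lipschitz functions. Let M = sup_{x ∈ [u,v]} |f(x) − g(x)|. Then D(f,g)² ≥ inf_{x ∈ [u,v]} (1/200)·∑_{i=1}^{200} ( max(M − 2L·|z_i − x|, 0) )². -/
open Finset in
theorem stmt_1 (L u v : ℝ) (hL : 0 < L) (huv : u < v) (f g : ℝ → ℝ)
    (hf : ∀ x ∈ Set.Icc u v, ∀ x' ∈ Set.Icc u v, |f x - f x'| ≤ L * |x - x'|)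
    (hg : ∀ x ∈ Set.Icc u v, ∀ x' ∈ Set.Icc u v, |g x - g x'| ≤ L * |x - x'|)
    (z : ℕ → ℝ) (hz : ∀ i, z i = (1 - (i : ℝ) / 200) * u + ((i : ℝ) / 200) * v)
    (M : ℝ) (hM : M = sSup ((fun x => |f x - g x|) '' Set.Icc u v)) :
    Real.sqrt ((1 / 200) * ∑ i ∈ Finset.Icc 1 200, (f (z i) - g (z i)) ^ 2) ^ 2
      ≥ sInf ((fun x => (1 / 200) *
          ∑ i ∈ Finset.Icc 1 200, (max (M - 2 * L * |z i - x|) 0) ^ 2) '' Set.Icc u v) := by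
  set h : ℝ → ℝ := fun x => |f x - g x| with hh
  have hzmem : ∀ i ∈ Finset.Icc 1 200, z i ∈ Set.Icc u v := by
    intro i hi
    simp only [Finset.mem_Icc] at hi
    rw [hz]
    have h1 : (0:ℝ) ≤ (i:ℝ) / 200 := by positivity
    have h2 : (i:ℝ) / 200 ≤ 1 := by
      rw [div_le_one (by norm_num)]
      exact_mod_cast hi.2
    constructor
    · nlinarith
    · nlinarith
  have hdiff : ∀ x ∈ Set.Icc u v, ∀ y ∈ Set.Icc u v, |h x - h y| ≤ 2 * L * |x - y| := by
    intro x hx y hy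
    have h1 : |h x - h y| ≤ |(f x - g x) - (f y - g y)| := abs_abs_sub_abs_le_abs_sub _ _
    have h2 : |(f x - g x) - (f y - g y)| ≤ |f x - f y| + |g x - g y| := by
      have : (f x - g x) - (f y - g y) = (f x - f y) - (g x - g y) := by ring
      rw [this]
      exact abs_sub _ _
    have h3 := hf x hx y hy
    have h4 := hg x hx y hy
    linarith
  have hcont : ContinuousOn h (Set.Icc u v) := by
    apply LipschitzOnWith.continuousOn (K := Real.toNNReal (2 * L))
    rw [lipschitzOnWith_iff_dist_le_mul]
    intro x hx y hy
    rw [Real.dist_eq, Real.dist_eq, Real.coe_toNNReal _ (by positivity)]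
    exact hdiff x hx y hy
  obtain ⟨x₀, hx₀, hmax⟩ := isCompact_Icc.exists_isMaxOn
    ⟨u, Set.left_mem_Icc.2 huv.le⟩ hcont
  have hM0 : M = h x₀ := by
    rw [hM]
    exact IsGreatest.csSup_eq ⟨⟨x₀, hx₀, rfl⟩, by rintro _ ⟨y, hy, rfl⟩; exact hmax hy⟩
  have key : ∀ i ∈ Finset.Icc 1 200,
      (max (M - 2 * L * |z i - x₀|) 0) ^ 2 ≤ (f (z i) - g (z i)) ^ 2 := by
    intro i hi
    have hzi := hzmem i hi
    have h1 : M - 2 * L * |z i - x₀| ≤ h (z i) := by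
      have := hdiff (z i) hzi x₀ hx₀
      have := abs_le.1 this
      rw [hM0]
      linarith [this.1]
    have h2 : max (M - 2 * L * |z i - x₀|) 0 ≤ h (z i) :=
      max_le h1 (abs_nonneg _)
    have h3 : (0:ℝ) ≤ max (M - 2 * L * |z i - x₀|) 0 := le_max_right _ _
    calc (max (M - 2 * L * |z i - x₀|) 0) ^ 2 ≤ (h (z i)) ^ 2 := by nlinarith
      _ = (f (z i) - g (z i)) ^ 2 := sq_abs _
  have hsumnn : (0:ℝ) ≤ (1 / 200) * ∑ i ∈ Finset.Icc 1 200, (f (z i) - g (z i)) ^ 2 := by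
    apply mul_nonneg (by norm_num)
    exact Finset.sum_nonneg fun i _ => sq_nonneg _
  rw [Real.sq_sqrt hsumnn]
  refine le_trans (csInf_le ?_ ⟨x₀, hx₀, rfl⟩) ?_
  · refine ⟨0, ?_⟩
    rintro _ ⟨y, hy, rfl⟩
    exact mul_nonneg (by norm_num) (Finset.sum_nonneg fun i _ => sq_nonneg _)
  · exact mul_le_mul_of_nonneg_left (Finset.sum_le_sum key) (by norm_num)
end

section
/- Let L > 0, let κ : [0,1] → ℝ be a 2L-Lipschitz function, and let i ≥ 1 be an integer. For ℓ ∈ {1, …, 2^i} let w_i(ℓ) = [(ℓ−1)·2^{−i}, ℓ·2^{−i}]. Then ∑_{ℓ=1}^{2^i} 𝟙[ min_{x ∈ w_i(ℓ)} κ(x) ≤ 20·L·2^{−i} ] ≤ 2^i · μ({ x ∈ [0,1] : κ(x) ≤ 22·L·2^{−i} }), where μ denotes Lebesgue measure. -/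
open MeasureTheory Finset in
open Classical in
theorem stmt_9 (L : ℝ) (hL : 0 < L) (κ : ℝ → ℝ)
    (hκ : ∀ x ∈ Set.Icc (0:ℝ) 1, ∀ x' ∈ Set.Icc (0:ℝ) 1,
      |κ x - κ x'| ≤ 2 * L * |x - x'|)
    (i : ℕ) (hi : 1 ≤ i) :
    ∑ ℓ ∈ Finset.Icc (1:ℕ) (2 ^ i),
        (if sInf (κ '' Set.Icc (((ℓ : ℝ) - 1) * 2 ^ (-(i:ℤ))) ((ℓ : ℝ) * 2 ^ (-(i:ℤ))))
            ≤ 20 * L * 2 ^ (-(i:ℤ)) then (1:ℝ) else 0)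
      ≤ 2 ^ i *
        (volume {x : ℝ | x ∈ Set.Icc (0:ℝ) 1 ∧ κ x ≤ 22 * L * 2 ^ (-(i:ℤ))}).toReal := by
  set h : ℝ := 2 ^ (-(i:ℤ)) with hh
  have hhpos : 0 < h := by positivity
  have hpow : (2:ℝ) ^ i * h = 1 := by
    rw [hh, zpow_neg, zpow_natCast]
    field_simp
  set S : Set ℝ := {x : ℝ | x ∈ Set.Icc (0:ℝ) 1 ∧ κ x ≤ 22 * L * h} with hS
  set T := (Finset.Icc (1:ℕ) (2^i)).filter
    (fun ℓ : ℕ => sInf (κ '' Set.Icc (((ℓ:ℝ)-1)*h) ((ℓ:ℝ)*h)) ≤ 20*L*h) with hT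
  have hsum : (∑ ℓ ∈ Finset.Icc (1:ℕ) (2 ^ i),
      (if sInf (κ '' Set.Icc (((ℓ : ℝ) - 1) * h) ((ℓ : ℝ) * h)) ≤ 20 * L * h
        then (1:ℝ) else 0)) = (T.card : ℝ) := by
    rw [hT, Finset.sum_boole]
  rw [hsum]
  -- bounds for ℓ ∈ Icc 1 (2^i)
  have hbound : ∀ ℓ ∈ Finset.Icc (1:ℕ) (2^i),
      0 ≤ ((ℓ:ℝ)-1)*h ∧ (ℓ:ℝ)*h ≤ 1 ∧ ((ℓ:ℝ)-1)*h ≤ (ℓ:ℝ)*h := by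
    intro ℓ hℓ
    simp only [Finset.mem_Icc] at hℓ
    have h1 : (1:ℝ) ≤ (ℓ:ℝ) := by exact_mod_cast hℓ.1
    have h2 : (ℓ:ℝ) ≤ 2^i := by exact_mod_cast hℓ.2
    refine ⟨by nlinarith, ?_, by nlinarith⟩
    nlinarith [hpow]
  -- subset property
  have hsub : ∀ ℓ ∈ T, Set.Ico (((ℓ:ℝ)-1)*h) ((ℓ:ℝ)*h) ⊆ S := by
    intro ℓ hℓ
    rw [hT, Finset.mem_filter] at hℓ
    obtain ⟨hℓm, hinf⟩ := hℓ
    obtain ⟨ha, hb, hab⟩ := hbound ℓ hℓm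
    intro x hx
    have hxIcc : x ∈ Set.Icc (((ℓ:ℝ)-1)*h) ((ℓ:ℝ)*h) := Set.Ico_subset_Icc_self hx
    have hsub01 : Set.Icc (((ℓ:ℝ)-1)*h) ((ℓ:ℝ)*h) ⊆ Set.Icc (0:ℝ) 1 := by
      intro y hy; exact ⟨le_trans ha hy.1, le_trans hy.2 hb⟩
    have hx01 : x ∈ Set.Icc (0:ℝ) 1 := hsub01 hxIcc
    refine ⟨hx01, ?_⟩
    -- κ x ≤ sInf + 2Lh
    have hlb : κ x - 2*L*h ≤ sInf (κ '' Set.Icc (((ℓ:ℝ)-1)*h) ((ℓ:ℝ)*h)) := by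
      apply le_csInf
      · exact (Set.nonempty_Icc.mpr hab).image κ
      · rintro b ⟨y, hy, rfl⟩
        have hy01 : y ∈ Set.Icc (0:ℝ) 1 := hsub01 hy
        have hdist : |x - y| ≤ h := by
          rw [abs_le]
          constructor <;> nlinarith [hxIcc.1, hxIcc.2, hy.1, hy.2]
        have := hκ x hx01 y hy01
        have h2 : |κ x - κ y| ≤ 2 * L * h := by
          calc |κ x - κ y| ≤ 2 * L * |x - y| := this
            _ ≤ 2 * L * h := by nlinarith
        have := abs_le.mp h2
        linarith [this.1]
    linarith
  -- disjointness
  have hdisj : (↑T : Set ℕ).Pairwise (fun ℓ m =>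
      Disjoint (Set.Ico (((ℓ:ℝ)-1)*h) ((ℓ:ℝ)*h)) (Set.Ico (((m:ℝ)-1)*h) ((m:ℝ)*h))) := by
    intro ℓ _ m _ hne
    rw [Set.Ico_disjoint_Ico]
    rcases lt_or_gt_of_ne hne with hlt | hlt
    · have : (ℓ:ℝ) ≤ (m:ℝ) - 1 := by
        have : (ℓ:ℝ) + 1 ≤ (m:ℝ) := by exact_mod_cast hlt
        linarith
      calc min ((ℓ:ℝ)*h) ((m:ℝ)*h) ≤ (ℓ:ℝ)*h := min_le_left _ _
        _ ≤ ((m:ℝ)-1)*h := by nlinarith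
        _ ≤ max (((ℓ:ℝ)-1)*h) (((m:ℝ)-1)*h) := le_max_right _ _
    · have : (m:ℝ) ≤ (ℓ:ℝ) - 1 := by
        have : (m:ℝ) + 1 ≤ (ℓ:ℝ) := by exact_mod_cast hlt
        linarith
      calc min ((ℓ:ℝ)*h) ((m:ℝ)*h) ≤ (m:ℝ)*h := min_le_right _ _
        _ ≤ ((ℓ:ℝ)-1)*h := by nlinarith
        _ ≤ max (((ℓ:ℝ)-1)*h) (((m:ℝ)-1)*h) := le_max_left _ _
  -- measure of union
  have hmeas : volume (⋃ ℓ ∈ T, Set.Ico (((ℓ:ℝ)-1)*h) ((ℓ:ℝ)*h))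
      = (T.card : ENNReal) * ENNReal.ofReal h := by
    rw [measure_biUnion_finset hdisj (fun ℓ _ => measurableSet_Ico)]
    have : ∀ ℓ ∈ T, volume (Set.Ico (((ℓ:ℝ)-1)*h) ((ℓ:ℝ)*h)) = ENNReal.ofReal h := by
      intro ℓ _
      rw [Real.volume_Ico]
      ring_nf
    rw [Finset.sum_congr rfl this, Finset.sum_const, nsmul_eq_mul]
  have hle : (T.card : ENNReal) * ENNReal.ofReal h ≤ volume S := by
    rw [← hmeas]
    apply measure_mono
    exact Set.iUnion₂_subset hsub
  have hSfin : volume S ≠ ⊤ := by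
    have : volume S ≤ volume (Set.Icc (0:ℝ) 1) := measure_mono (fun x hx => hx.1)
    rw [Real.volume_Icc] at this
    exact ne_top_of_le_ne_top (by simp) this
  have hreal : (T.card : ℝ) * h ≤ (volume S).toReal := by
    have := ENNReal.toReal_mono hSfin hle
    rwa [ENNReal.toReal_mul, ENNReal.toReal_natCast, ENNReal.toReal_ofReal hhpos.le] at this
  calc (T.card : ℝ) = 2^i * ((T.card : ℝ) * h) := by
        rw [← mul_assoc, mul_comm ((2:ℝ)^i), mul_assoc, hpow, mul_one]
      _ ≤ 2^i * (volume S).toReal := by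
        apply mul_le_mul_of_nonneg_left hreal (by positivity)
end
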